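/- The function g(u,v,w) = w^(-3/2)·(√(v²+3uw) - v)·(v√(v²+3uw) - v² - 6uw) is nonincreasing in w for fixed u, v > 0; indeed ∂g/∂w = -(3v/(2w^(5/2)))·(2v² + 3uw - 2v√(v²+3uw)) ≤ 0 since 2v² + 3uw ≥ 2v√(v²+3uw) for all u, v, w > 0. -/

import Mathlib

theorem stmt_12 (u v : ℝ) (hu : 0 < u) (hv : 0 < v) :
    let g : ℝ → ℝ := fun w => w ^ (-(3 : ℝ) / 2) *
      ((Real.sqrt (v ^ 2 + 3 * u * w) - v) *
        (v * Real.sqrt (v ^ 2 + 3 * u * w) - v ^ 2 - 6 * u * w))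
    (∀ w : ℝ, 0 < w → HasDerivAt g
        (-(3 * v / (2 * w ^ ((5 : ℝ) / 2))) *
          (2 * v ^ 2 + 3 * u * w - 2 * v * Real.sqrt (v ^ 2 + 3 * u * w))) w) ∧
    (∀ w : ℝ, 0 < w →
      2 * v * Real.sqrt (v ^ 2 + 3 * u * w) ≤ 2 * v ^ 2 + 3 * u * w) ∧
    AntitoneOn g (Set.Ioi 0) := by
  intro g
  have key : ∀ w : ℝ, 0 < w → HasDerivAt g
      (-(3 * v / (2 * w ^ ((5 : ℝ) / 2))) *
        (2 * v ^ 2 + 3 * u * w - 2 * v * Real.sqrt (v ^ 2 + 3 * u * w))) w := by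
    intro w hw
    have hx : 0 < v ^ 2 + 3 * u * w := by positivity
    set s := Real.sqrt (v ^ 2 + 3 * u * w) with hs
    have hs0 : 0 < s := Real.sqrt_pos.2 hx
    have hs2 : s ^ 2 = v ^ 2 + 3 * u * w := Real.sq_sqrt hx.le
    -- derivative of sqrt(v^2+3uw)
    have hinner : HasDerivAt (fun w : ℝ => v ^ 2 + 3 * u * w) (3 * u) w := by
      simpa using ((hasDerivAt_id w).const_mul (3 * u)).const_add (v ^ 2)
    have hsqrt : HasDerivAt (fun w : ℝ => Real.sqrt (v ^ 2 + 3 * u * w))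
        (3 * u / (2 * s)) w := by
      have := (Real.hasDerivAt_sqrt (x := v ^ 2 + 3 * u * w) hx.ne').comp w hinner
      refine this.congr_deriv ?_
      field_simp
      exact hs
    -- derivative of the product factor
    have h2 : HasDerivAt (fun w : ℝ =>
        (Real.sqrt (v ^ 2 + 3 * u * w) - v) *
          (v * Real.sqrt (v ^ 2 + 3 * u * w) - v ^ 2 - 6 * u * w))
        ((3 * u / (2 * s)) * (v * s - v ^ 2 - 6 * u * w) +
          (s - v) * (v * (3 * u / (2 * s)) - 6 * u)) w := by
      have ha : HasDerivAt (fun w : ℝ => Real.sqrt (v ^ 2 + 3 * u * w) - v)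
          (3 * u / (2 * s)) w := hsqrt.sub_const v
      have hb : HasDerivAt (fun w : ℝ =>
          v * Real.sqrt (v ^ 2 + 3 * u * w) - v ^ 2 - 6 * u * w)
          (v * (3 * u / (2 * s)) - 6 * u) w := by
        have := ((hsqrt.const_mul v).sub_const (v ^ 2)).sub
          (((hasDerivAt_id w).const_mul (6 * u)))
        exact this.congr_deriv (by ring)
      exact ha.mul hb
    have h1 : HasDerivAt (fun w : ℝ => w ^ (-(3 : ℝ) / 2))
        ((-(3 : ℝ) / 2) * w ^ (-(3 : ℝ) / 2 - 1)) w :=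
      Real.hasDerivAt_rpow_const (Or.inl hw.ne')
    have hD := h1.mul h2
    refine hD.congr_deriv ?_
    have hrw : w ^ (-(3 : ℝ) / 2 - 1) = w ^ (-(5 : ℝ) / 2) := by norm_num
    have hrw2 : w ^ (-(3 : ℝ) / 2) = w * w ^ (-(5 : ℝ) / 2) := by
      rw [show w * w ^ (-(5 : ℝ) / 2) = w ^ (1:ℝ) * w ^ (-(5 : ℝ) / 2) by
        rw [Real.rpow_one], ← Real.rpow_add hw]
      norm_num
    set B := w ^ (-(5 : ℝ) / 2) with hBdef
    have hB0 : 0 < B := Real.rpow_pos_of_pos hw _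
    have hrw3 : w ^ ((5 : ℝ) / 2) * B = 1 := by
      rw [hBdef, ← Real.rpow_add hw]; norm_num
    have hB : w ^ ((5 : ℝ) / 2) = B⁻¹ := eq_inv_of_mul_eq_one_left
      (by linear_combination hrw3)
    have hu2 : u = (s ^ 2 - v ^ 2) / (3 * w) := by
      field_simp; linarith [hs2]
    rw [hrw, hrw2, hB, ← hs, hu2]
    field_simp
    ring
  refine ⟨key, ?_, ?_⟩
  · intro w hw
    have hx : 0 < v ^ 2 + 3 * u * w := by positivity
    have hs2 : Real.sqrt (v ^ 2 + 3 * u * w) ^ 2 = v ^ 2 + 3 * u * w :=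
      Real.sq_sqrt hx.le
    nlinarith [sq_nonneg (Real.sqrt (v ^ 2 + 3 * u * w) - v)]
  · have hconv : Convex ℝ (Set.Ioi (0:ℝ)) := convex_Ioi 0
    apply antitoneOn_of_deriv_nonpos hconv
    · exact fun w hw => ((key w hw).continuousAt).continuousWithinAt
    · intro w hw
      rw [interior_Ioi] at hw
      exact ((key w hw).differentiableAt).differentiableWithinAt
    · intro w hw
      rw [interior_Ioi] at hw
      have hw' : (0:ℝ) < w := hw
      rw [(key w hw).deriv]
      have hx : 0 < v ^ 2 + 3 * u * w := by positivity
      have hs2 : Real.sqrt (v ^ 2 + 3 * u * w) ^ 2 = v ^ 2 + 3 * u * w :=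
        Real.sq_sqrt hx.le
      have h52 : (0:ℝ) < w ^ ((5 : ℝ) / 2) := Real.rpow_pos_of_pos hw _
      have hpos : 0 ≤ 2 * v ^ 2 + 3 * u * w - 2 * v * Real.sqrt (v ^ 2 + 3 * u * w) := by
        nlinarith [sq_nonneg (Real.sqrt (v ^ 2 + 3 * u * w) - v)]
      have : 0 ≤ 3 * v / (2 * w ^ ((5 : ℝ) / 2)) := by positivity
      nlinarith
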